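/- Let γ : ℝ → ℝ be a locally Lipschitz extended class-K function, and let v : [0, ∞) → ℝ be differentiable with v′(t) ≥ -γ(v(t)) for all t ≥ 0. Then min(v(t), 0) → 0 as t → ∞. -/

import Mathlib

/-- **Attractivity of the nonnegative region (scalar comparison).** If `γ` is a
locally Lipschitz extended class-K function (continuous, strictly increasing,
`γ(0) = 0`) and `v : [0, ∞) → ℝ` is differentiable with `v′(t) ≥ -γ(v(t))` for all
`t ≥ 0`, then `min(v(t), 0) → 0` as `t → ∞`. -/
theorem scalar_attractivity (γ : ℝ → ℝ)
    (hγlip : LocallyLipschitz γ) (hγcont : Continuous γ)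
    (hγmono : StrictMono γ) (hγ0 : γ 0 = 0)
    (v v' : ℝ → ℝ)
    (hv : ∀ t ∈ Set.Ici (0 : ℝ), HasDerivAt v (v' t) t)
    (hineq : ∀ t ∈ Set.Ici (0 : ℝ), v' t ≥ -γ (v t)) :
    Filter.Tendsto (fun t : ℝ => min (v t) 0) Filter.atTop (nhds 0) := by
  have hvcont : ∀ s : Set ℝ, s ⊆ Set.Ici (0 : ℝ) → ContinuousOn v s := by
    intro s hs t ht
    exact (hv t (hs ht)).continuousAt.continuousWithinAt
  by_cases hA : ∃ t₀ ≥ (0 : ℝ), 0 ≤ v t₀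
  · -- forward invariance: once nonnegative, stays nonnegative
    obtain ⟨t₀, ht₀, hvt₀⟩ := hA
    have key : ∀ t ≥ t₀, 0 ≤ v t := by
      intro t₁ ht₁
      by_contra hneg
      push_neg at hneg
      have hsub : Set.Icc t₀ t₁ ⊆ Set.Ici (0 : ℝ) := fun x hx => le_trans ht₀ hx.1
      set S : Set ℝ := Set.Icc t₀ t₁ ∩ v ⁻¹' Set.Ici 0 with hSdef
      have hSne : S.Nonempty := ⟨t₀, ⟨le_refl _, ht₁⟩, hvt₀⟩
      have hSbdd : BddAbove S := ⟨t₁, fun x hx => hx.1.2⟩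
      have hScl : IsClosed S :=
        (hvcont _ hsub).preimage_isClosed_of_isClosed isClosed_Icc isClosed_Ici
      obtain ⟨⟨hs1, hs2⟩, hs3⟩ := hScl.csSup_mem hSne hSbdd
      set s := sSup S
      have hvs : 0 ≤ v s := hs3
      have hslt : s < t₁ := lt_of_le_of_ne hs2 (by intro h; rw [h] at hvs; exact absurd hvs (not_le.2 hneg))
      have hs0 : (0 : ℝ) ≤ s := le_trans ht₀ hs1
      -- on (s, t₁], v < 0, hence v' ≥ -γ(v) ≥ 0, so v is monotone on [s, t₁]
      have hvlt : ∀ x ∈ Set.Ioo s t₁, v x < 0 := by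
        intro x hx
        by_contra hge
        push_neg at hge
        have : x ∈ S := ⟨⟨le_trans hs1 hx.1.le, hx.2.le⟩, hge⟩
        exact absurd (le_csSup hSbdd this) (not_le.2 hx.1)
      have hsub2 : Set.Icc s t₁ ⊆ Set.Ici (0 : ℝ) := fun x hx => le_trans hs0 hx.1
      have hmono : MonotoneOn v (Set.Icc s t₁) := by
        apply monotoneOn_of_deriv_nonneg (convex_Icc s t₁) (hvcont _ hsub2)
        · intro x hx
          rw [interior_Icc] at hx
          exact (hv x (hsub2 ⟨hx.1.le, hx.2.le⟩)).differentiableAt.differentiableWithinAt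
        · intro x hx
          rw [interior_Icc] at hx
          have hx0 : x ∈ Set.Ici (0 : ℝ) := hsub2 ⟨hx.1.le, hx.2.le⟩
          rw [(hv x hx0).deriv]
          have : γ (v x) < γ 0 := hγmono (hvlt x hx)
          rw [hγ0] at this
          linarith [hineq x hx0]
      have := hmono ⟨le_refl s, hslt.le⟩ ⟨hslt.le, le_refl t₁⟩ hslt.le
      linarith
    have hev : ∀ᶠ t in Filter.atTop, min (v t) 0 = 0 :=
      Filter.eventually_atTop.2 ⟨t₀, fun t ht => min_eq_right (key t ht)⟩
    exact Filter.Tendsto.congr' (hev.mono fun t h => h.symm) tendsto_const_nhds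
  · -- v always negative: v increases to its sup L, and L = 0
    push_neg at hA
    have hneg : ∀ t ∈ Set.Ici (0 : ℝ), v t < 0 := fun t ht => hA t ht
    have hγneg : ∀ t ∈ Set.Ici (0 : ℝ), γ (v t) < 0 := by
      intro t ht
      have := hγmono (hneg t ht)
      rwa [hγ0] at this
    have hmono : MonotoneOn v (Set.Ici 0) := by
      apply monotoneOn_of_deriv_nonneg (convex_Ici 0) (hvcont _ le_rfl)
      · intro x hx
        rw [interior_Ici] at hx
        exact (hv x (Set.mem_Ici.2 (Set.mem_Ioi.1 hx).le)).differentiableAt.differentiableWithinAt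
      · intro x hx
        rw [interior_Ici] at hx
        rw [(hv x (Set.mem_Ici.2 (Set.mem_Ioi.1 hx).le)).deriv]
        linarith [hineq x (Set.mem_Ici.2 (Set.mem_Ioi.1 hx).le), hγneg x (Set.mem_Ici.2 (Set.mem_Ioi.1 hx).le)]
    have hbdd : BddAbove (v '' Set.Ici 0) :=
      ⟨0, by rintro y ⟨t, ht, rfl⟩; exact (hneg t ht).le⟩
    have hne : (v '' Set.Ici 0).Nonempty := ⟨v 0, 0, Set.mem_Ici.2 le_rfl, rfl⟩
    set L := sSup (v '' Set.Ici 0) with hLdef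
    have hle : ∀ t ∈ Set.Ici (0 : ℝ), v t ≤ L := fun t ht =>
      le_csSup hbdd ⟨t, ht, rfl⟩
    have hL0 : L ≤ 0 := csSup_le hne (by rintro y ⟨t, ht, rfl⟩; exact (hneg t ht).le)
    have hLeq : L = 0 := by
      by_contra hLne
      have hLlt : L < 0 := lt_of_le_of_ne hL0 hLne
      set c := -γ L with hcdef
      have hc : 0 < c := by
        have := hγmono hLlt
        rw [hγ0] at this
        simp [hcdef]; linarith
      have hd : ∀ t ∈ Set.Ici (0 : ℝ), c ≤ v' t := by
        intro t ht
        have h1 : γ (v t) ≤ γ L := hγmono.monotone (hle t ht)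
        have := hineq t ht
        simp only [hcdef]; linarith
      -- g t = v t - c t is monotone on Ici 0, so v t ≥ v 0 + c t → ∞
      have hg : MonotoneOn (fun t => v t - c * t) (Set.Ici 0) := by
        apply monotoneOn_of_deriv_nonneg (convex_Ici 0)
        · exact (hvcont _ le_rfl).sub ((continuous_const.mul continuous_id).continuousOn)
        · intro x hx
          rw [interior_Ici] at hx
          exact ((hv x (Set.mem_Ici.2 (Set.mem_Ioi.1 hx).le)).sub ((hasDerivAt_id x).const_mul c)).differentiableAt.differentiableWithinAt
        · intro x hx
          rw [interior_Ici] at hx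
          have hder : HasDerivAt (fun t => v t - c * t) (v' x - c * 1) x :=
            (hv x (Set.mem_Ici.2 (Set.mem_Ioi.1 hx).le)).sub ((hasDerivAt_id x).const_mul c)
          rw [hder.deriv]
          have := hd x (Set.mem_Ici.2 (Set.mem_Ioi.1 hx).le)
          linarith
      set T := max 0 ((L - v 0) / c + 1) with hTdef
      have hT0 : (0 : ℝ) ≤ T := le_max_left _ _
      have hTge : (L - v 0) / c + 1 ≤ T := le_max_right _ _
      have := hg (Set.mem_Ici.2 le_rfl) (Set.mem_Ici.2 hT0) hT0
      simp only [mul_zero, sub_zero] at this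
      -- v 0 ≤ v T - c * T, so v T ≥ v 0 + c T > L
      have hcT : L - v 0 < c * T := by
        have h1 : (L - v 0) / c < T := by linarith
        calc L - v 0 = c * ((L - v 0) / c) := by field_simp
          _ < c * T := by exact mul_lt_mul_of_pos_left h1 hc
      have := hle T hT0
      linarith
    -- now v tends to L = 0 from below; min (v t) 0 = v t
    rw [Metric.tendsto_atTop]
    intro ε hε
    have hlt : -ε < L := by rw [hLeq]; linarith
    obtain ⟨y, ⟨t₀, ht₀, rfl⟩, hy⟩ := exists_lt_of_lt_csSup hne hlt
    refine ⟨t₀, fun t ht => ?_⟩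
    have ht0 : (0 : ℝ) ≤ t := le_trans ht₀ ht
    have h1 : v t₀ ≤ v t := hmono ht₀ ht0 ht
    have h2 : v t < 0 := hneg t ht0
    rw [min_eq_left h2.le, Real.dist_eq, sub_zero, abs_lt]
    constructor <;> linarith
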